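/- The market-clearing price is unique: if p > 0 and p' > 0 are both market-clearing prices for the same advertiser set I and the same supply S > 0, then p = p'. -/
import Mathlib


/-- `p` is a market-clearing (optimal) price for advertiser set `I` with values `v`,
budgets `B` and supply `S`. -/
def IsClearingPrice {ι : Type*} (I : Finset ι) (v B : ι → ℝ) (S p : ℝ) : Prop :=
  0 < p ∧ ∃ α : ι → ℝ, (∀ i ∈ I, 0 ≤ α i ∧ α i ≤ 1) ∧
    (∀ i ∈ I, p < v i → α i = 1) ∧ (∀ i ∈ I, v i < p → α i = 0) ∧
    S = ∑ i ∈ I, α i * B i / p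

/-- Ex post monopoly: the market-clearing price is unique. -/
theorem stmt_3 {ι : Type*} (I : Finset ι) (v B : ι → ℝ)
    (hv : ∀ i ∈ I, 0 < v i) (hB : ∀ i ∈ I, 0 < B i) (S : ℝ) (hS : 0 < S)
    (p p' : ℝ) (hp : IsClearingPrice I v B S p) (hp' : IsClearingPrice I v B S p') :
    p = p' := by
  have key : ∀ q q' : ℝ, q < q' → IsClearingPrice I v B S q →
      IsClearingPrice I v B S q' → False := by
    intro q q' hlt hq hq'
    obtain ⟨hq0, α, hα01, hα1, hα0, hsum⟩ := hq
    obtain ⟨hq'0, α', hα'01, hα'1, hα'0, hsum'⟩ := hq'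
    -- find j with positive term in the q'-sum
    have hex : ∃ j ∈ I, 0 < α' j * B j / q' := by
      by_contra h
      push_neg at h
      have : S ≤ 0 := hsum' ▸ Finset.sum_nonpos h
      linarith
    obtain ⟨j, hjI, hjpos⟩ := hex
    have hαj' : 0 < α' j := by
      by_contra h
      push_neg at h
      have : α' j * B j / q' ≤ 0 := by
        apply div_nonpos_of_nonpos_of_nonneg
        · exact mul_nonpos_of_nonpos_of_nonneg h (hB j hjI).le
        · exact hq'0.le
      linarith
    have hle : ∀ i ∈ I, α' i * B i / q' ≤ α i * B i / q := by
      intro i hiI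
      rcases lt_or_ge 0 (α' i) with hpos | hnp
      · have hvi : q' ≤ v i := by
          by_contra h
          push_neg at h
          have := hα'0 i hiI h
          linarith
        have hαi : α i = 1 := hα1 i hiI (lt_of_lt_of_le hlt hvi)
        calc α' i * B i / q' ≤ 1 * B i / q' := by
              gcongr
              exacts [(hB i hiI).le, (hα'01 i hiI).2]
          _ ≤ 1 * B i / q := by
              rw [one_mul]
              gcongr
              exact (hB i hiI).le
          _ = α i * B i / q := by rw [hαi]
      · have h1 : α' i * B i / q' ≤ 0 := by
          apply div_nonpos_of_nonpos_of_nonneg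
          · exact mul_nonpos_of_nonpos_of_nonneg hnp (hB i hiI).le
          · exact hq'0.le
        have h2 : 0 ≤ α i * B i / q :=
          div_nonneg (mul_nonneg (hα01 i hiI).1 (hB i hiI).le) hq0.le
        linarith
    have hstrict : α' j * B j / q' < α j * B j / q := by
      have hvj : q' ≤ v j := by
        by_contra h
        push_neg at h
        have := hα'0 j hjI h
        linarith
      have hαj : α j = 1 := hα1 j hjI (lt_of_lt_of_le hlt hvj)
      calc α' j * B j / q' ≤ 1 * B j / q' := by
            gcongr
            exacts [(hB j hjI).le, (hα'01 j hjI).2]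
        _ < 1 * B j / q := by
            rw [one_mul]
            exact div_lt_div_of_pos_left (hB j hjI) hq0 hlt
        _ = α j * B j / q := by rw [hαj]
    have : S < S := by
      calc S = ∑ i ∈ I, α' i * B i / q' := hsum'
        _ < ∑ i ∈ I, α i * B i / q :=
            Finset.sum_lt_sum hle ⟨j, hjI, hstrict⟩
        _ = S := hsum.symm
    exact lt_irrefl S this
  rcases lt_trichotomy p p' with h | h | h
  · exact absurd (key p p' h hp hp') not_false
  · exact h
  · exact absurd (key p' p h hp' hp) not_false
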